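/- Let a > 0 and c > 0. Then ∫₀^∞ (1 − e^{−c/t})·a·e^{−a(t+s)} dt = e^{−as}·(1 − 2√(ac)·K₁(2√(ac))) for any s ≥ 0, where K₁ is the modified Bessel function of the second kind of order 1. -/
import Mathlib

open Real MeasureTheory

/-- The modified Bessel function of the second kind of order 1, via its
standard integral representation `K₁(x) = ∫₀^∞ e^{-x cosh t} cosh t dt`. -/
noncomputable def besselK1 (x : ℝ) : ℝ :=
  ∫ t in Set.Ioi (0:ℝ), Real.exp (-x * Real.cosh t) * Real.cosh t

private lemma cov_aux (b : ℝ) (hb0 : 0 < b) (g : ℝ → ℝ) :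
    (∫ t in Set.Ioi (0:ℝ), g t = ∫ u : ℝ, (b * Real.exp u) * g (b * Real.exp u)) ∧
    (MeasureTheory.IntegrableOn g (Set.Ioi (0:ℝ)) ↔
      MeasureTheory.Integrable (fun u => (b * Real.exp u) * g (b * Real.exp u))) := by
  have hinj : Set.InjOn (fun u => b * Real.exp u) Set.univ := fun x _ y _ h => by
    simpa [hb0.ne'] using h
  have himg : (fun u => b * Real.exp u) '' Set.univ = Set.Ioi 0 := by
    rw [Set.image_univ]
    ext y
    simp only [Set.mem_range, Set.mem_Ioi]
    constructor
    · rintro ⟨u, rfl⟩; positivity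
    · intro hy; exact ⟨Real.log (y / b), by rw [Real.exp_log (by positivity)]; field_simp⟩
  have hderiv : ∀ u ∈ Set.univ, HasDerivWithinAt (fun u => b * Real.exp u) (b * Real.exp u) Set.univ u :=
    fun u _ => ((Real.hasDerivAt_exp u).const_mul b).hasDerivWithinAt
  have hfun : (fun u => |b * Real.exp u| • g (b * Real.exp u))
      = fun u => (b * Real.exp u) * g (b * Real.exp u) := by
    ext u; rw [abs_of_pos (by positivity), smul_eq_mul]
  constructor
  · have := integral_image_eq_integral_abs_deriv_smul MeasurableSet.univ hderiv hinj g
    rw [himg, hfun] at this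
    rw [this, MeasureTheory.setIntegral_univ]
  · have := integrableOn_image_iff_integrableOn_abs_deriv_smul MeasurableSet.univ hderiv hinj g
    rw [himg, hfun, MeasureTheory.integrableOn_univ] at this
    exact this

theorem stmt_2 (a c s : ℝ) (ha : 0 < a) (hc : 0 < c) (hs : 0 ≤ s) :
    ∫ t in Set.Ioi (0:ℝ), (1 - Real.exp (-c / t)) * (a * Real.exp (-a * (t + s)))
      = Real.exp (-a * s) *
          (1 - 2 * Real.sqrt (a * c) * besselK1 (2 * Real.sqrt (a * c))) := by
  set r := Real.sqrt (a * c) with hr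
  have hr0 : 0 < r := Real.sqrt_pos.mpr (mul_pos ha hc)
  set b := Real.sqrt c / Real.sqrt a with hbdef
  have hb0 : 0 < b := div_pos (Real.sqrt_pos.mpr hc) (Real.sqrt_pos.mpr ha)
  have hab : a * b = r ∧ c / b = r := by
    have h1 : Real.sqrt a * Real.sqrt a = a := Real.mul_self_sqrt ha.le
    have h2 : Real.sqrt c * Real.sqrt c = c := Real.mul_self_sqrt hc.le
    have ha' : (0:ℝ) < Real.sqrt a := Real.sqrt_pos.mpr ha
    have hc' : (0:ℝ) < Real.sqrt c := Real.sqrt_pos.mpr hc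
    rw [hbdef, hr, Real.sqrt_mul ha.le]
    constructor <;> (field_simp; nlinarith)
  -- step 1: rewrite the integrand
  have h1 : ∀ t ∈ Set.Ioi (0:ℝ),
      (1 - Real.exp (-c / t)) * (a * Real.exp (-a * (t + s)))
        = Real.exp (-a * s) * (a * Real.exp (-a * t) - a * Real.exp (-(a * t + c / t))) := by
    intro t _
    have : Real.exp (-a * (t + s)) = Real.exp (-a * t) * Real.exp (-a * s) := by
      rw [← Real.exp_add]; ring_nf
    rw [this]
    have : Real.exp (-c / t) * Real.exp (-a * t) = Real.exp (-(a * t + c / t)) := by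
      rw [← Real.exp_add]; ring_nf
    linear_combination (-(a * Real.exp (-a * s))) * this
  rw [MeasureTheory.setIntegral_congr_fun measurableSet_Ioi h1,
    MeasureTheory.integral_const_mul]
  congr 1
  -- integrability of the two pieces
  have hI1 : MeasureTheory.IntegrableOn (fun t => a * Real.exp (-a * t)) (Set.Ioi (0:ℝ)) :=
    (exp_neg_integrableOn_Ioi 0 ha).const_mul a
  have hmeas : MeasureTheory.AEStronglyMeasurable (fun t => a * Real.exp (-(a * t + c / t)))
      (MeasureTheory.volume.restrict (Set.Ioi (0:ℝ))) := by
    apply Measurable.aestronglyMeasurable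
    fun_prop
  have hI2 : MeasureTheory.IntegrableOn (fun t => a * Real.exp (-(a * t + c / t)))
      (Set.Ioi (0:ℝ)) := by
    apply MeasureTheory.Integrable.mono hI1 hmeas
    filter_upwards [MeasureTheory.ae_restrict_mem measurableSet_Ioi] with t ht
    have ht0 : (0:ℝ) < t := ht
    rw [Real.norm_eq_abs, Real.norm_eq_abs, abs_of_pos (by positivity), abs_of_pos (by positivity)]
    have : Real.exp (-(a * t + c / t)) ≤ Real.exp (-a * t) := by
      apply Real.exp_le_exp.mpr
      have : 0 < c / t := by positivity
      linarith
    nlinarith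
  rw [MeasureTheory.integral_sub hI1 hI2]
  -- first integral = 1
  have hA : ∫ t in Set.Ioi (0:ℝ), a * Real.exp (-a * t) = 1 := by
    rw [MeasureTheory.integral_const_mul]
    have := integral_comp_mul_left_Ioi (fun x => Real.exp (-x)) 0 ha
    simp only [mul_zero, smul_eq_mul] at this
    have h2 : ∫ x in Set.Ioi (0:ℝ), Real.exp (-(a * x)) = a⁻¹ * ∫ x in Set.Ioi (0:ℝ), Real.exp (-x) := this
    rw [show (fun t => Real.exp (-a * t)) = fun t => Real.exp (-(a * t)) by ext t; ring_nf] at *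
    rw [h2, integral_exp_neg_Ioi_zero]
    field_simp
  -- second integral = 2 r K₁(2r)
  have key := cov_aux b hb0 (fun t => a * Real.exp (-(a * t + c / t)))
  have hsimp : (fun u => (b * Real.exp u) * (a * Real.exp (-(a * (b * Real.exp u) + c / (b * Real.exp u)))))
      = fun u => r * (Real.exp u * Real.exp (-(2 * r) * Real.cosh u)) := by
    ext u
    have he : Real.exp u ≠ 0 := (Real.exp_pos u).ne'
    have h3 : a * (b * Real.exp u) = r * Real.exp u := by rw [← mul_assoc, hab.1]
    have h4 : c / (b * Real.exp u) = r * Real.exp (-u) := by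
      rw [div_mul_eq_div_div, hab.2, Real.exp_neg, div_eq_mul_inv]
    rw [h3, h4, Real.cosh_eq]
    have : -(2 * r) * ((Real.exp u + Real.exp (-u)) / 2) = -(r * Real.exp u + r * Real.exp (-u)) := by
      ring
    rw [this]
    linear_combination (Real.exp u * Real.exp (-(r * Real.exp u + r * Real.exp (-u)))) * hab.1
  have hint : MeasureTheory.Integrable (fun u => r * (Real.exp u * Real.exp (-(2*r) * Real.cosh u))) := by
    rw [← hsimp]; exact (key.2).mp hI2
  have hF : MeasureTheory.Integrable (fun u => Real.exp u * Real.exp (-(2*r) * Real.cosh u)) := by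
    have := hint.const_mul r⁻¹
    simpa [← mul_assoc, inv_mul_cancel₀ hr0.ne'] using this
  have hchg : ∫ t in Set.Ioi (0:ℝ), a * Real.exp (-(a * t + c / t))
      = r * ∫ u : ℝ, Real.exp u * Real.exp (-(2*r) * Real.cosh u) := by
    rw [key.1, hsimp, MeasureTheory.integral_const_mul]
  -- now evaluate ∫_ℝ e^u e^{-2r cosh u}
  set F : ℝ → ℝ := fun u => Real.exp u * Real.exp (-(2*r) * Real.cosh u) with hFdef
  set G : ℝ → ℝ := fun u => Real.exp (-u) * Real.exp (-(2*r) * Real.cosh u) with hGdef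
  have hGF : ∀ u ∈ Set.Ioi (0:ℝ), G u ≤ F u := by
    intro u hu
    have : Real.exp (-u) ≤ Real.exp u := Real.exp_le_exp.mpr (by simp at hu ⊢; linarith)
    exact mul_le_mul_of_nonneg_right this (Real.exp_pos _).le
  have hGint : MeasureTheory.IntegrableOn G (Set.Ioi (0:ℝ)) := by
    apply MeasureTheory.Integrable.mono (hF.integrableOn)
    · apply Measurable.aestronglyMeasurable; fun_prop
    · filter_upwards [MeasureTheory.ae_restrict_mem measurableSet_Ioi] with u hu
      rw [Real.norm_eq_abs, Real.norm_eq_abs, abs_of_pos (by positivity), abs_of_pos (by positivity)]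
      exact hGF u hu
  have hsplit : ∫ u : ℝ, F u = (∫ u in Set.Iic (0:ℝ), F u) + ∫ u in Set.Ioi (0:ℝ), F u :=
    (intervalIntegral.integral_Iic_add_Ioi hF.integrableOn hF.integrableOn).symm
  have hrefl : ∫ u in Set.Iic (0:ℝ), F u = ∫ u in Set.Ioi (0:ℝ), G u := by
    have := integral_comp_neg_Ioi (0:ℝ) F
    rw [neg_zero] at this
    rw [← this]
    apply MeasureTheory.setIntegral_congr_fun measurableSet_Ioi
    intro u _
    simp only [hFdef, hGdef, Real.cosh_neg]
  have hsum : (∫ u in Set.Ioi (0:ℝ), G u) + (∫ u in Set.Ioi (0:ℝ), F u)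
      = 2 * besselK1 (2*r) := by
    rw [← MeasureTheory.integral_add hGint hF.integrableOn]
    rw [besselK1, ← MeasureTheory.integral_const_mul]
    apply MeasureTheory.setIntegral_congr_fun measurableSet_Ioi
    intro u _
    simp only [hFdef, hGdef, Real.cosh_eq]
    ring
  rw [hA, hchg, hsplit, hrefl, hsum]
  ring
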